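/- arXiv:1607.04555 — 3 statements merged into one kernel-verified Lean document; each statement's English description precedes it below -/
import Mathlib

section
/- Let F = (f₁,…,f_k) be a k-uple of pairwise commuting holomorphic self-maps of 𝔹^q, let (𝔹^d, ℓ, T) be a semi-model for F with ball base and let (𝔹^m, h, Φ) be a quasi-model for F with ball base. Then: (1) there exists at most one morphism, i.e., if η, β : 𝔹^d → 𝔹^m are holomorphic maps satisfying η ∘ ℓ = h = β ∘ ℓ and η ∘ τ_j = φ_j ∘ η, β ∘ τ_j = φ_j ∘ β for all 1 ≤ j ≤ k, then η = β; (2) if η : 𝔹^d → 𝔹^m is such a morphism, then η(𝔹^d) = ⋃_{N∈ℕ^k} Φ^{−N}(h(𝔹^q)). -/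
open Set Filter

noncomputable section

/-- `E q` is `ℂ^q` as a Euclidean (Hermitian) space. -/
abbrev E (q : ℕ) : Type := EuclideanSpace ℂ (Fin q)

/-- The open unit ball `𝔹^q ⊂ ℂ^q`. -/
def B (q : ℕ) : Set (E q) := Metric.ball 0 1

/-- A holomorphic map from `𝔹^q` to `𝔹^d`: it maps the ball into the ball and is
complex differentiable on the ball. -/
def HolMap (q d : ℕ) (f : E q → E d) : Prop :=
  Set.MapsTo f (B q) (B d) ∧ DifferentiableOn ℂ f (B q)

/-- An automorphism of `𝔹^d`: a holomorphic self-map with a holomorphic inverse on the ball. -/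
def IsAut (d : ℕ) (τ : E d → E d) : Prop :=
  HolMap d d τ ∧ ∃ σ : E d → E d, HolMap d d σ ∧
    Set.EqOn (σ ∘ τ) id (B d) ∧ Set.EqOn (τ ∘ σ) id (B d)

/-- `iterT f N = f₁^{n₁} ∘ ⋯ ∘ f_k^{n_k}` for a `k`-uple `f` and a multi-index `N ∈ ℕ^k`. -/
def iterT {α : Type} {k : ℕ} (f : Fin k → α → α) (N : Fin k → ℕ) : α → α :=
  (List.ofFn fun j => (f j)^[N j]).foldr (· ∘ ·) id

/-- Pairwise commutation (on the ball) of a `k`-uple of self-maps. -/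
def CommutingOn (q k : ℕ) (f : Fin k → E q → E q) : Prop :=
  ∀ i j, Set.EqOn (f i ∘ f j) (f j ∘ f i) (B q)

/-- A quasi-model with ball base for the `k`-uple `f`. -/
def IsQuasiModel (q d k : ℕ) (f : Fin k → E q → E q) (ℓ : E q → E d)
    (τ : Fin k → E d → E d) : Prop :=
  HolMap q d ℓ ∧ (∀ j, IsAut d (τ j)) ∧
    (∀ i j, Set.EqOn (τ i ∘ τ j) (τ j ∘ τ i) (B d)) ∧
    (∀ j, Set.EqOn (ℓ ∘ f j) (τ j ∘ ℓ) (B q))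

/-- A semi-model with ball base: a quasi-model with `⋃_{N ∈ ℕ^k} T^{-N}(ℓ(𝔹^q)) = 𝔹^d`,
where `T^{-N}(S)` is expressed as `{y ∈ 𝔹^d | T^N y ∈ S}`. -/
def IsSemiModel (q d k : ℕ) (f : Fin k → E q → E q) (ℓ : E q → E d)
    (τ : Fin k → E d → E d) : Prop :=
  IsQuasiModel q d k f ℓ τ ∧
    (⋃ N : Fin k → ℕ, B d ∩ (iterT τ N) ⁻¹' (ℓ '' B q)) = B d

/-- A canonical Kobayashi hyperbolic semi-model (CSM) with ball base: a semi-model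
through which every quasi-model with ball base (necessarily uniquely) factorizes. -/
def IsCSM (q d k : ℕ) (f : Fin k → E q → E q) (ℓ : E q → E d)
    (τ : Fin k → E d → E d) : Prop :=
  IsSemiModel q d k f ℓ τ ∧
    ∀ (m : ℕ) (h : E q → E m) (φ : Fin k → E m → E m),
      IsQuasiModel q m k f h φ →
      ∃ η : E d → E m, HolMap d m η ∧ Set.EqOn (η ∘ ℓ) h (B q) ∧
        ∀ j, Set.EqOn (η ∘ τ j) (φ j ∘ η) (B d)

/-- Inverse hyperbolic tangent. -/
def arctanh (t : ℝ) : ℝ := Real.log ((1 + t) / (1 - t)) / 2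

/-- The Kobayashi distance of the unit ball `𝔹^q`:
`k_{𝔹^q}(z,w) = arctanh √(1 − (1−‖z‖²)(1−‖w‖²)/|1−⟨z,w⟩|²)`. -/
def kob (q : ℕ) (z w : E q) : ℝ :=
  arctanh (Real.sqrt (1 - ((1 - ‖z‖ ^ 2) * (1 - ‖w‖ ^ 2)) /
    ‖(1 - (inner ℂ z w : ℂ))‖ ^ 2))

/-- The Kobayashi ball of center `p` and radius `r` in `𝔹^q`. -/
def Bk (q : ℕ) (p : E q) (r : ℝ) : Set (E q) := {z ∈ B q | kob q z p < r}

/-- `p ∈ ∂𝔹^q` is the Denjoy–Wolff point of `f`: the iterates of `f` converge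
locally uniformly on `𝔹^q` to the constant `p`. -/
def IsDW (q : ℕ) (f : E q → E q) (p : E q) : Prop :=
  ‖p‖ = 1 ∧
    TendstoLocallyUniformlyOn (fun n z => f^[n] z) (fun _ => p) Filter.atTop (B q)

/-- The dilation `λ = liminf_{z→p} (1−‖f(z)‖)/(1−‖z‖)` of `f` at a boundary point `p`. -/
def dilation (q : ℕ) (f : E q → E q) (p : E q) : ℝ :=
  Filter.liminf (fun z => (1 - ‖f z‖) / (1 - ‖z‖)) (nhdsWithin p (B q))

/-- The rank of the complex differential of `f` at `y`. -/
def rankAt (q d : ℕ) (f : E q → E d) (y : E q) : ℕ :=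
  Module.finrank ℂ (LinearMap.range (fderiv ℂ f y).toLinearMap)

/-- A quasi-model with ball base for a single self-map `f`. -/
def IsQuasiModel1 (q d : ℕ) (f : E q → E q) (ℓ : E q → E d) (τ : E d → E d) : Prop :=
  HolMap q d ℓ ∧ IsAut d τ ∧ Set.EqOn (ℓ ∘ f) (τ ∘ ℓ) (B q)

/-- A semi-model with ball base for a single self-map `f`. -/
def IsSemiModel1 (q d : ℕ) (f : E q → E q) (ℓ : E q → E d) (τ : E d → E d) : Prop :=
  IsQuasiModel1 q d f ℓ τ ∧ (⋃ n : ℕ, B d ∩ τ^[n] ⁻¹' (ℓ '' B q)) = B d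

/-- A canonical Kobayashi hyperbolic semi-model with ball base for a single self-map `f`. -/
def IsCSM1 (q d : ℕ) (f : E q → E q) (ℓ : E q → E d) (τ : E d → E d) : Prop :=
  IsSemiModel1 q d f ℓ τ ∧
    ∀ (m : ℕ) (h : E q → E m) (φ : E m → E m), IsQuasiModel1 q m f h φ →
      ∃ η : E d → E m, HolMap d m η ∧ Set.EqOn (η ∘ ℓ) h (B q) ∧
        Set.EqOn (η ∘ τ) (φ ∘ η) (B d)

section Aux

variable {α β ι : Type*}

lemma aux_foldr_mapsTo (s : Set α) (G : ι → α → α) (hG : ∀ i, Set.MapsTo (G i) s s) :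
    ∀ L : List ι, Set.MapsTo ((L.map G).foldr (· ∘ ·) id) s s := by
  intro L
  induction L with
  | nil => simpa using Set.mapsTo_id s
  | cons a l ih => simpa [Function.comp] using (hG a).comp ih

lemma aux_foldr_bijOn (s : Set α) (G : ι → α → α) (hG : ∀ i, Set.BijOn (G i) s s) :
    ∀ L : List ι, Set.BijOn ((L.map G).foldr (· ∘ ·) id) s s := by
  intro L
  induction L with
  | nil => simpa using Set.bijOn_id s
  | cons a l ih => simpa [Function.comp] using (hG a).comp ih

lemma aux_foldr_semiconj (s : Set α) (η : α → β) (G : ι → α → α) (G' : ι → β → β)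
    (hG : ∀ i, Set.MapsTo (G i) s s)
    (hE : ∀ i, Set.EqOn (η ∘ G i) (G' i ∘ η) s) :
    ∀ L : List ι, Set.EqOn (η ∘ (L.map G).foldr (· ∘ ·) id)
      ((L.map G').foldr (· ∘ ·) id ∘ η) s := by
  intro L
  induction L with
  | nil => intro x hx; rfl
  | cons a l ih =>
      intro x hx
      have hx' : (l.map G).foldr (· ∘ ·) id x ∈ s := aux_foldr_mapsTo s G hG l hx
      have h1 := hE a hx'
      have h2 := ih hx
      simp only [Function.comp_apply] at h1 h2 ⊢
      simp only [List.map_cons, List.foldr_cons, Function.comp_apply]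
      rw [h1, h2]

lemma aux_bijOn_iterate {g : α → α} {s : Set α} (hg : Set.BijOn g s s) :
    ∀ n : ℕ, Set.BijOn g^[n] s s := by
  intro n
  induction n with
  | zero => simpa using Set.bijOn_id s
  | succ n ih => rw [Function.iterate_succ']; exact hg.comp ih

lemma aux_semiconj_iterate {g : α → α} {g' : β → β} {η : α → β} {s : Set α}
    (hg : Set.MapsTo g s s) (hE : Set.EqOn (η ∘ g) (g' ∘ η) s) :
    ∀ n : ℕ, Set.EqOn (η ∘ g^[n]) (g'^[n] ∘ η) s := by
  intro n
  induction n with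
  | zero => intro x hx; rfl
  | succ n ih =>
      intro x hx
      have hx' : g^[n] x ∈ s := hg.iterate n hx
      have h1 := hE hx'
      have h2 := ih hx
      simp only [Function.comp_apply] at h1 h2 ⊢
      rw [Function.iterate_succ', Function.iterate_succ']
      simp only [Function.comp_apply]
      rw [h1, h2]

end Aux

lemma aut_bijOn {d : ℕ} {τ : E d → E d} (hτ : IsAut d τ) : Set.BijOn τ (B d) (B d) := by
  obtain ⟨⟨hm, _⟩, σ, ⟨hσm, _⟩, h1, h2⟩ := hτ
  exact Set.InvOn.bijOn ⟨fun x hx => h1 hx, fun x hx => h2 hx⟩ hm hσm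

lemma iterT_bijOn {d k : ℕ} {τ : Fin k → E d → E d} (hτ : ∀ j, IsAut d (τ j))
    (N : Fin k → ℕ) : Set.BijOn (iterT τ N) (B d) (B d) := by
  rw [iterT, List.ofFn_eq_map]
  exact aux_foldr_bijOn (B d) _ (fun j => aux_bijOn_iterate (aut_bijOn (hτ j)) (N j)) _

lemma iterT_semiconj {d m k : ℕ} {τ : Fin k → E d → E d} {φ : Fin k → E m → E m}
    {η : E d → E m} (hτ : ∀ j, IsAut d (τ j))
    (hE : ∀ j, Set.EqOn (η ∘ τ j) (φ j ∘ η) (B d)) (N : Fin k → ℕ) :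
    Set.EqOn (η ∘ iterT τ N) (iterT φ N ∘ η) (B d) := by
  rw [iterT, iterT, List.ofFn_eq_map, List.ofFn_eq_map]
  exact aux_foldr_semiconj (B d) η _ _
    (fun j => (aut_bijOn (hτ j)).mapsTo.iterate (N j))
    (fun j => aux_semiconj_iterate (aut_bijOn (hτ j)).mapsTo (hE j) (N j)) _

/-- (1) there is at most one morphism from a semi-model to a quasi-model;
(2) the image of such a morphism is `⋃_{N∈ℕ^k} Φ^{−N}(h(𝔹^q))`. -/
theorem morphism_unique_and_image (q d m k : ℕ) (f : Fin k → E q → E q)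
    (hf : ∀ j, HolMap q q (f j)) (hcomm : CommutingOn q k f)
    (ℓ : E q → E d) (τ : Fin k → E d → E d) (hsm : IsSemiModel q d k f ℓ τ)
    (h : E q → E m) (φ : Fin k → E m → E m) (hqm : IsQuasiModel q m k f h φ) :
    (∀ η β : E d → E m,
      HolMap d m η → Set.EqOn (η ∘ ℓ) h (B q) →
        (∀ j, Set.EqOn (η ∘ τ j) (φ j ∘ η) (B d)) →
      HolMap d m β → Set.EqOn (β ∘ ℓ) h (B q) →
        (∀ j, Set.EqOn (β ∘ τ j) (φ j ∘ β) (B d)) →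
      Set.EqOn η β (B d)) ∧
    (∀ η : E d → E m,
      HolMap d m η → Set.EqOn (η ∘ ℓ) h (B q) →
        (∀ j, Set.EqOn (η ∘ τ j) (φ j ∘ η) (B d)) →
      η '' B d = ⋃ N : Fin k → ℕ, B m ∩ (iterT φ N) ⁻¹' (h '' B q)) := by
  obtain ⟨⟨hℓ, hτ, hτcomm, hℓf⟩, hunion⟩ := hsm
  obtain ⟨hh, hφ, hφcomm, hhf⟩ := hqm
  -- For any y ∈ B d, find N and x ∈ B q with iterT τ N y = ℓ x
  have key : ∀ y ∈ B d, ∃ (N : Fin k → ℕ) (x : E q), x ∈ B q ∧ iterT τ N y = ℓ x := by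
    intro y hy
    rw [← hunion] at hy
    obtain ⟨_, ⟨N, rfl⟩, hy'⟩ := hy
    obtain ⟨x, hx, hxe⟩ := hy'.2
    exact ⟨N, x, hx, hxe.symm⟩
  constructor
  · intro η β hη hηℓ hητ hβ hβℓ hβτ y hy
    obtain ⟨N, x, hx, hxe⟩ := key y hy
    have e1 : iterT φ N (η y) = h x := by
      have := (iterT_semiconj hτ hητ N hy).symm
      simp only [Function.comp_apply] at this
      rw [this, hxe]; exact hηℓ hx
    have e2 : iterT φ N (β y) = h x := by
      have := (iterT_semiconj hτ hβτ N hy).symm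
      simp only [Function.comp_apply] at this
      rw [this, hxe]; exact hβℓ hx
    exact (iterT_bijOn hφ N).injOn (hη.1 hy) (hβ.1 hy) (e1.trans e2.symm)
  · intro η hη hηℓ hητ
    apply Set.Subset.antisymm
    · rintro _ ⟨y, hy, rfl⟩
      obtain ⟨N, x, hx, hxe⟩ := key y hy
      refine Set.mem_iUnion.2 ⟨N, hη.1 hy, ?_⟩
      have := (iterT_semiconj hτ hητ N hy).symm
      simp only [Function.comp_apply] at this
      refine ⟨x, hx, ?_⟩
      rw [this, hxe]; exact (hηℓ hx).symm
    · intro w hw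
      simp only [Set.mem_iUnion] at hw
      obtain ⟨N, hwB, hwpre⟩ := hw
      obtain ⟨x, hx, hxe⟩ := hwpre
      obtain ⟨y, hy, hye⟩ := (iterT_bijOn hτ N).surjOn (hℓ.1 hx)
      have e1 : iterT φ N (η y) = iterT φ N w := by
        have := iterT_semiconj hτ hητ N hy
        simp only [Function.comp_apply] at this
        rw [← this, hye]
        rw [show η (ℓ x) = h x from hηℓ hx, hxe]
      exact ⟨y, hy, (iterT_bijOn hφ N).injOn (hη.1 hy) hwB e1⟩
end
end

section
/- Let E = (f₁,…,f_k, g₁,…,g_p) be a (k+p)-uple of pairwise commuting holomorphic self-maps of 𝔹^q and let F := (f₁,…,f_k). If (𝔹^a, ℓ, S) is a canonical Kobayashi hyperbolic semi-model for E and (𝔹^b, h, Φ) is a canonical Kobayashi hyperbolic semi-model for F, then a ≤ b; that is, type(E) ≤ type(F). -/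
open Set Filter

noncomputable section

open MeasureTheory
lemma iterT_zero {α : Type} (τ : Fin 0 → α → α) (N : Fin 0 → ℕ) : iterT τ N = id := by
  simp [iterT]

lemma iterT_succ {α : Type} {n : ℕ} (τ : Fin (n+1) → α → α) (N : Fin (n+1) → ℕ) :
    iterT τ N = (τ 0)^[N 0] ∘ iterT (fun j => τ j.succ) (fun j => N j.succ) := by
  simp [iterT, List.ofFn_succ]

lemma mapsTo_iterT {α : Type} {s : Set α} : ∀ {n : ℕ} (τ : Fin n → α → α) (N : Fin n → ℕ),
    (∀ j, Set.MapsTo (τ j) s s) → Set.MapsTo (iterT τ N) s s := by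
  intro n
  induction n with
  | zero => intro τ N _; rw [iterT_zero]; exact Set.mapsTo_id s
  | succ m ih =>
    intro τ N hτ
    rw [iterT_succ]
    exact ((hτ 0).iterate (N 0)).comp (ih _ _ fun j => hτ j.succ)

lemma leftInv_iterate {α : Type} {s : Set α} {τ σ : α → α} (hτ : Set.MapsTo τ s s)
    (hinv : Set.EqOn (σ ∘ τ) id s) (m : ℕ) : ∀ y ∈ s, σ^[m] (τ^[m] y) = y := by
  induction m with
  | zero => intro y _; simp
  | succ m ih =>
    intro y hy
    rw [Function.iterate_succ_apply' τ, Function.iterate_succ_apply σ]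
    have ht : τ^[m] y ∈ s := hτ.iterate m hy
    have : σ (τ (τ^[m] y)) = τ^[m] y := hinv ht
    rw [this]; exact ih y hy

lemma diffOn_iterate {d : ℕ} {σ : E d → E d} (hm : Set.MapsTo σ (B d) (B d))
    (hd : DifferentiableOn ℂ σ (B d)) (m : ℕ) : DifferentiableOn ℂ σ^[m] (B d) := by
  induction m with
  | zero => simpa using differentiableOn_id
  | succ m ih =>
    rw [Function.iterate_succ]
    exact DifferentiableOn.comp ih hd hm

lemma exists_leftInv (d : ℕ) : ∀ (n : ℕ) (τ : Fin n → E d → E d),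
    (∀ j, Set.MapsTo (τ j) (B d) (B d)) →
    (∀ j, ∃ σ, Set.MapsTo σ (B d) (B d) ∧ DifferentiableOn ℂ σ (B d) ∧
      Set.EqOn (σ ∘ τ j) id (B d)) →
    ∀ N : Fin n → ℕ, ∃ ρ : E d → E d, DifferentiableOn ℂ ρ (B d) ∧
      ∀ y ∈ B d, ρ (iterT τ N y) = y := by
  intro n
  induction n with
  | zero =>
    intro τ _ _ N
    exact ⟨id, differentiableOn_id, fun y _ => by rw [iterT_zero]; rfl⟩
  | succ m ih =>
    intro τ hτ hinv N
    obtain ⟨σ0, hσ0m, hσ0d, hσ0inv⟩ := hinv 0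
    obtain ⟨ρ', hρ'd, hρ'inv⟩ := ih (fun j => τ j.succ) (fun j => hτ j.succ)
      (fun j => hinv j.succ) (fun j => N j.succ)
    refine ⟨ρ' ∘ σ0^[N 0], hρ'd.comp (diffOn_iterate hσ0m hσ0d (N 0)) (hσ0m.iterate (N 0)), ?_⟩
    intro y hy
    rw [iterT_succ]
    have ht : iterT (fun j => τ j.succ) (fun j => N j.succ) y ∈ B d :=
      mapsTo_iterT _ _ (fun j => hτ j.succ) hy
    show ρ' (σ0^[N 0] ((τ 0)^[N 0] _)) = y
    rw [leftInv_iterate (hτ 0) hσ0inv (N 0) _ ht]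
    exact hρ'inv y hy

/-- the coordinate projection `E a → E b` for `b ≤ a`, as a continuous linear map. -/
def projCLM {a b : ℕ} (hba : b ≤ a) : E a →L[ℂ] E b :=
  LinearMap.toContinuousLinearMap
    { toFun := fun z => (WithLp.toLp 2 (fun i => z (Fin.castLE hba i)) : E b)
      map_add' := fun x y => rfl
      map_smul' := fun c x => rfl }

lemma finrank_E (a : ℕ) : Module.finrank ℝ (E a) = 2 * a := by
  have := Module.finrank_mul_finrank ℝ ℂ (E a)
  simp [finrank_euclideanSpace_fin, Complex.finrank_real_complex] at this ⊢
  omega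

lemma image_null {a b : ℕ} (hba : b < a) {η : E b → E a}
    (hηm : Set.MapsTo η (B b) (B a)) (hηd : DifferentiableOn ℂ η (B b))
    {ρ : E a → E a} (hρd : DifferentiableOn ℂ ρ (B a))
    [MeasurableSpace (E a)] [BorelSpace (E a)]
    (μ : Measure (E a)) [μ.IsAddHaarMeasure] :
    μ ((fun w => ρ (η (projCLM hba.le w))) '' ((projCLM hba.le) ⁻¹' B b)) = 0 := by
  set π := projCLM hba.le with hπdef
  set s : Set (E a) := ⇑π ⁻¹' B b with hsdef
  have hopenb : IsOpen (B b) := Metric.isOpen_ball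
  have hopena : IsOpen (B a) := Metric.isOpen_ball
  set f' : E a → E a →L[ℝ] E a := fun x =>
    ((fderiv ℂ ρ (η (π x))).comp ((fderiv ℂ η (π x)).comp π)).restrictScalars ℝ with hf'def
  apply addHaar_image_eq_zero_of_det_fderivWithin_eq_zero μ (f' := f')
  · intro x hx
    have hπx : π x ∈ B b := hx
    have hη : HasFDerivAt η (fderiv ℂ η (π x)) (π x) :=
      (hηd.differentiableAt (hopenb.mem_nhds hπx)).hasFDerivAt
    have hρ : HasFDerivAt ρ (fderiv ℂ ρ (η (π x))) (η (π x)) :=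
      (hρd.differentiableAt (hopena.mem_nhds (hηm hπx))).hasFDerivAt
    exact ((hρ.comp x (hη.comp x π.hasFDerivAt)).restrictScalars ℝ).hasFDerivWithinAt
  · intro x _
    by_contra hdet
    have hdet' : LinearMap.det ((f' x).toLinearMap) ≠ 0 := hdet
    have hsurj : Function.Surjective (f' x) := by
      intro y
      obtain ⟨v, hv⟩ := (LinearMap.equivOfDetNeZero ((f' x).toLinearMap) hdet').surjective y
      exact ⟨v, hv⟩
    set C : E b →ₗ[ℝ] E a :=
      (((fderiv ℂ ρ (η (π x))).comp (fderiv ℂ η (π x))).restrictScalars ℝ).toLinearMap with hC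
    have hCs : Function.Surjective C := by
      intro y
      obtain ⟨v, hv⟩ := hsurj y
      exact ⟨π v, hv⟩
    have hle := LinearMap.finrank_range_le C
    rw [LinearMap.range_eq_top.2 hCs, finrank_top] at hle
    rw [finrank_E a, finrank_E b] at hle
    omega


/-- for a `(k+p)`-uple `E` of commuting self-maps extending the `k`-uple `F`,
the types satisfy `type(E) ≤ type(F)`: the base dimension `a` of a CSM for `E` is at most
the base dimension `b` of a CSM for `F`. -/
theorem type_monotone (q k p a b : ℕ) (e : Fin (k + p) → E q → E q)
    (he : ∀ j, HolMap q q (e j)) (hcomm : CommutingOn q (k + p) e)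
    (ℓ : E q → E a) (S : Fin (k + p) → E a → E a) (hE : IsCSM q a (k + p) e ℓ S)
    (h : E q → E b) (Φ : Fin k → E b → E b)
    (hF : IsCSM q b k (fun j => e (Fin.castAdd p j)) h Φ) :
    a ≤ b := by
  by_contra hab
  push_neg at hab
  classical
  have hq : IsQuasiModel q a k (fun j => e (Fin.castAdd p j)) ℓ
      (fun j => S (Fin.castAdd p j)) :=
    ⟨hE.1.1.1, fun j => hE.1.1.2.1 _, fun i j => hE.1.1.2.2.1 _ _, fun j => hE.1.1.2.2.2 _⟩
  obtain ⟨η, hηhol, hηℓ, -⟩ := hF.2 a ℓ _ hq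
  have hηm : Set.MapsTo η (B b) (B a) := hηhol.1
  have hηd : DifferentiableOn ℂ η (B b) := hηhol.2
  have hSm : ∀ j, Set.MapsTo (S j) (B a) (B a) := fun j => (hE.1.1.2.1 j).1.1
  have hSinv : ∀ j, ∃ σ, Set.MapsTo σ (B a) (B a) ∧ DifferentiableOn ℂ σ (B a) ∧
      Set.EqOn (σ ∘ S j) id (B a) := by
    intro j
    obtain ⟨-, σ, hσhol, hl, -⟩ := hE.1.1.2.1 j
    exact ⟨σ, hσhol.1, hσhol.2, hl⟩
  choose ρ hρd hρinv using fun N => exists_leftInv a (k + p) S hSm hSinv N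
  letI : MeasurableSpace (E a) := borel _
  haveI : BorelSpace (E a) := ⟨rfl⟩
  set μ : MeasureTheory.Measure (E a) := MeasureTheory.Measure.addHaar with hμ
  set π := projCLM hab.le with hπ
  have hmh : Set.MapsTo h (B q) (B b) := hF.1.1.1.1
  have hcover : B a ⊆ ⋃ N : Fin (k + p) → ℕ, (fun w => ρ N (η (π w))) '' (⇑π ⁻¹' B b) := by
    intro y hy
    have hy' : y ∈ ⋃ N : Fin (k + p) → ℕ, B a ∩ iterT S N ⁻¹' (ℓ '' B q) := by
      rw [hE.1.2]; exact hy
    rw [Set.mem_iUnion] at hy'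
    obtain ⟨N, hyBa, hpre⟩ := hy'
    obtain ⟨x₀, hx₀, hℓx⟩ := hpre
    set z : E b := h x₀ with hz
    have hzb : z ∈ B b := hmh hx₀
    set w : E a := WithLp.toLp 2 (fun i : Fin a => if hib : (i : ℕ) < b then z ⟨i, hib⟩ else 0) with hw
    have hπw : π w = z := by
      ext i
      show (if hib : ((Fin.castLE hab.le i : Fin a) : ℕ) < b
        then z ⟨(Fin.castLE hab.le i : Fin a), hib⟩ else 0) = z i
      simp only [Fin.coe_castLE]
      rw [dif_pos i.isLt]
    rw [Set.mem_iUnion]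
    refine ⟨N, w, ?_, ?_⟩
    · show π w ∈ B b
      rw [hπw]; exact hzb
    · show ρ N (η (π w)) = y
      rw [hπw]
      have hηz : η z = iterT S N y := by rw [← hℓx]; exact hηℓ hx₀
      rw [hηz]
      exact hρinv N y hyBa
  have hzero : μ (⋃ N : Fin (k + p) → ℕ, (fun w => ρ N (η (π w))) '' (⇑π ⁻¹' B b)) = 0 :=
    MeasureTheory.measure_iUnion_null fun N => image_null hab hηm hηd (hρd N) μ
  have hpos : 0 < μ (B a) :=
    Metric.isOpen_ball.measure_pos μ ⟨0, by simp [B]⟩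
  exact hpos.ne' (le_antisymm (le_trans (MeasureTheory.measure_mono hcover) hzero.le)
    (zero_le))
end
end

section
/- Let F = (f₁,…,f_k) be a k-uple of pairwise commuting holomorphic self-maps of 𝔹^q, let (𝔹^d, h, Φ) be a canonical Kobayashi hyperbolic semi-model for F, and let g be an automorphism of 𝔹^q commuting with every f_j. Then Γ_F(g), the unique holomorphic self-map Γ of 𝔹^d with Γ ∘ h = h ∘ g and Γ ∘ φ_j = φ_j ∘ Γ for all j, is an automorphism of 𝔹^d. -/
open Set Filter

noncomputable section

private lemma foldr_mapsTo {α : Type} {S : Set α} :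
    ∀ L : List (α → α), (∀ g ∈ L, Set.MapsTo g S S) →
      Set.MapsTo (L.foldr (· ∘ ·) id) S S
  | [], _ => Set.mapsTo_id S
  | g :: L, hm => by
      simp only [List.foldr_cons]
      exact (hm g (by simp)).comp
        (foldr_mapsTo L (fun g' hg' => hm g' (by simp [hg'])))

private lemma foldr_injOn {α : Type} {S : Set α} :
    ∀ L : List (α → α), (∀ g ∈ L, Set.MapsTo g S S) →
      (∀ g ∈ L, Set.InjOn g S) → Set.InjOn (L.foldr (· ∘ ·) id) S
  | [], _, _ => Set.injOn_id S
  | g :: L, hm, hi => by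
      simp only [List.foldr_cons]
      exact (hi g (by simp)).comp
        (foldr_injOn L (fun g' hg' => hm g' (by simp [hg']))
          (fun g' hg' => hi g' (by simp [hg'])))
        (foldr_mapsTo L (fun g' hg' => hm g' (by simp [hg'])))

private lemma foldr_comm {α : Type} {S : Set α} {Δ : α → α} (hΔ : Set.MapsTo Δ S S) :
    ∀ L : List (α → α), (∀ g ∈ L, Set.MapsTo g S S) →
      (∀ g ∈ L, Set.EqOn (Δ ∘ g) (g ∘ Δ) S) →
      Set.EqOn (Δ ∘ L.foldr (· ∘ ·) id) (L.foldr (· ∘ ·) id ∘ Δ) S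
  | [], _, _ => fun _ _ => rfl
  | g :: L, hm, hc => by
      intro x hx
      have hLm := foldr_mapsTo L (fun g' hg' => hm g' (by simp [hg']))
      have hIH := foldr_comm hΔ L (fun g' hg' => hm g' (by simp [hg']))
        (fun g' hg' => hc g' (by simp [hg'])) hx
      have e := hc g (by simp) (hLm hx)
      simp only [List.foldr_cons, Function.comp_apply] at *
      rw [e, hIH]

private lemma comm_iter {α : Type} {S : Set α} {Δ τ : α → α}
    (hΔ : Set.MapsTo Δ S S) (hτ : Set.MapsTo τ S S)
    (hc : Set.EqOn (Δ ∘ τ) (τ ∘ Δ) S) :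
    ∀ n, Set.EqOn (Δ ∘ τ^[n]) (τ^[n] ∘ Δ) S
  | 0 => fun _ _ => rfl
  | n + 1 => by
      intro x hx
      have h1 : τ^[n] x ∈ S := hτ.iterate n hx
      have e1 : Δ (τ (τ^[n] x)) = τ (Δ (τ^[n] x)) := hc h1
      have e2 : Δ (τ^[n] x) = τ^[n] (Δ x) := comm_iter hΔ hτ hc n hx
      simp only [Function.comp_apply, Function.iterate_succ_apply']
      rw [e1, e2]

private lemma injOn_iter {α : Type} {S : Set α} {τ : α → α}
    (hm : Set.MapsTo τ S S) (hi : Set.InjOn τ S) :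
    ∀ n, Set.InjOn τ^[n] S
  | 0 => Set.injOn_id S
  | n + 1 => by
      rw [Function.iterate_succ']
      exact hi.comp (injOn_iter hm hi n) (hm.iterate n)

private lemma IsAut.injOn' {d : ℕ} {τ : E d → E d} (h : IsAut d τ) :
    Set.InjOn τ (B d) := by
  obtain ⟨hτ, σ, hσ, hστ, hτσ⟩ := h
  intro x hx y hy hxy
  have ex : σ (τ x) = x := hστ hx
  have ey : σ (τ y) = y := hστ hy
  rw [← ex, ← ey, hxy]

private lemma iterT_mapsTo {d k : ℕ} {φ : Fin k → E d → E d}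
    (hφ : ∀ j, Set.MapsTo (φ j) (B d) (B d)) (N : Fin k → ℕ) :
    Set.MapsTo (iterT φ N) (B d) (B d) := by
  apply foldr_mapsTo
  intro g hg
  rw [List.mem_ofFn] at hg
  obtain ⟨i, rfl⟩ := hg
  exact (hφ i).iterate _

private lemma iterT_injOn {d k : ℕ} {φ : Fin k → E d → E d}
    (hφ : ∀ j, Set.MapsTo (φ j) (B d) (B d))
    (hinj : ∀ j, Set.InjOn (φ j) (B d)) (N : Fin k → ℕ) :
    Set.InjOn (iterT φ N) (B d) := by
  apply foldr_injOn
  · intro g hg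
    rw [List.mem_ofFn] at hg
    obtain ⟨i, rfl⟩ := hg
    exact (hφ i).iterate _
  · intro g hg
    rw [List.mem_ofFn] at hg
    obtain ⟨i, rfl⟩ := hg
    exact injOn_iter (hφ i) (hinj i) _

private lemma iterT_comm {d k : ℕ} {φ : Fin k → E d → E d} {Δ : E d → E d}
    (hΔ : Set.MapsTo Δ (B d) (B d))
    (hφ : ∀ j, Set.MapsTo (φ j) (B d) (B d))
    (hc : ∀ j, Set.EqOn (Δ ∘ φ j) (φ j ∘ Δ) (B d)) (N : Fin k → ℕ) :
    Set.EqOn (Δ ∘ iterT φ N) (iterT φ N ∘ Δ) (B d) := by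
  apply foldr_comm hΔ
  · intro g hg
    rw [List.mem_ofFn] at hg
    obtain ⟨i, rfl⟩ := hg
    exact (hφ i).iterate _
  · intro g hg
    rw [List.mem_ofFn] at hg
    obtain ⟨i, rfl⟩ := hg
    exact comm_iter hΔ (hφ i) (hc i) _

private lemma eq_id_of_CSM {q d k : ℕ} {f : Fin k → E q → E q} {h : E q → E d}
    {φ : Fin k → E d → E d} (hcsm : IsCSM q d k f h φ)
    {Δ : E d → E d} (hΔ : Set.MapsTo Δ (B d) (B d))
    (hΔh : Set.EqOn (Δ ∘ h) h (B q))
    (hΔφ : ∀ j, Set.EqOn (Δ ∘ φ j) (φ j ∘ Δ) (B d)) :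
    Set.EqOn Δ id (B d) := by
  have hφm : ∀ j, Set.MapsTo (φ j) (B d) (B d) := fun j => (hcsm.1.1.2.1 j).1.1
  have hφi : ∀ j, Set.InjOn (φ j) (B d) := fun j => (hcsm.1.1.2.1 j).injOn'
  intro y hy
  have hmem : y ∈ ⋃ N : Fin k → ℕ, B d ∩ (iterT φ N) ⁻¹' (h '' B q) := by
    rw [hcsm.1.2]; exact hy
  simp only [Set.mem_iUnion, Set.mem_inter_iff, Set.mem_preimage,
    Set.mem_image] at hmem
  obtain ⟨N, hyB, x, hxB, hhx⟩ := hmem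
  have key : iterT φ N (Δ y) = iterT φ N y := by
    have e1 : Δ (iterT φ N y) = iterT φ N (Δ y) := iterT_comm hΔ hφm hΔφ N hy
    have e2 : Δ (h x) = h x := hΔh hxB
    rw [← e1, ← hhx, e2]
  exact iterT_injOn hφm hφi N (hΔ hy) hy key

/-- if `g` is an automorphism of `𝔹^q` commuting with every `f_j`, then
`Γ_F(g)` is an automorphism of the CSM base `𝔹^d`. -/
theorem Gamma_of_aut (q d k : ℕ) (f : Fin k → E q → E q)
    (hf : ∀ j, HolMap q q (f j)) (hcomm : CommutingOn q k f)
    (h : E q → E d) (φ : Fin k → E d → E d) (hcsm : IsCSM q d k f h φ)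
    (g : E q → E q) (hg : IsAut q g)
    (hgcomm : ∀ j, Set.EqOn (f j ∘ g) (g ∘ f j) (B q))
    (Γ : E d → E d) (hΓ : HolMap d d Γ)
    (hΓh : Set.EqOn (Γ ∘ h) (h ∘ g) (B q))
    (hΓφ : ∀ j, Set.EqOn (Γ ∘ φ j) (φ j ∘ Γ) (B d)) :
    IsAut d Γ := by
  obtain ⟨hgH, σ, hσH, hσg, hgσ⟩ := hg
  have hhH : HolMap q d h := hcsm.1.1.1
  have hintw : ∀ j, Set.EqOn (h ∘ f j) (φ j ∘ h) (B q) := hcsm.1.1.2.2.2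
  have hσf : ∀ j, Set.EqOn (σ ∘ f j) (f j ∘ σ) (B q) := by
    intro j x hx
    have hσx : σ x ∈ B q := hσH.1 hx
    have hfσx : f j (σ x) ∈ B q := (hf j).1 hσx
    have e1 : g (σ x) = x := hgσ hx
    have e2 : f j (g (σ x)) = g (f j (σ x)) := hgcomm j hσx
    have e3 : σ (g (f j (σ x))) = f j (σ x) := hσg hfσx
    show σ (f j x) = f j (σ x)
    conv_lhs => rw [← e1, e2, e3]
  have hqm : IsQuasiModel q d k f (h ∘ σ) φ := by
    refine ⟨⟨hhH.1.comp hσH.1, hhH.2.comp hσH.2 hσH.1⟩,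
      hcsm.1.1.2.1, hcsm.1.1.2.2.1, ?_⟩
    intro j x hx
    have hσx : σ x ∈ B q := hσH.1 hx
    show h (σ (f j x)) = φ j (h (σ x))
    rw [show σ (f j x) = f j (σ x) from hσf j hx]
    exact hintw j hσx
  obtain ⟨Γ', hΓ'H, hΓ'h, hΓ'φ⟩ := hcsm.2 d (h ∘ σ) φ hqm
  have h₁ : Set.EqOn (Γ ∘ Γ') id (B d) := by
    apply eq_id_of_CSM hcsm (hΓ.1.comp hΓ'H.1)
    · intro x hx
      have hσx : σ x ∈ B q := hσH.1 hx
      show Γ (Γ' (h x)) = h x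
      have e1 : Γ' (h x) = h (σ x) := hΓ'h hx
      have e2 : Γ (h (σ x)) = h (g (σ x)) := hΓh hσx
      have e3 : g (σ x) = x := hgσ hx
      rw [e1, e2, e3]
    · intro j y hy
      have hy' : Γ' y ∈ B d := hΓ'H.1 hy
      show Γ (Γ' (φ j y)) = φ j (Γ (Γ' y))
      rw [show Γ' (φ j y) = φ j (Γ' y) from hΓ'φ j hy]
      exact hΓφ j hy'
  have h₂ : Set.EqOn (Γ' ∘ Γ) id (B d) := by
    apply eq_id_of_CSM hcsm (hΓ'H.1.comp hΓ.1)
    · intro x hx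
      have hgx : g x ∈ B q := hgH.1 hx
      show Γ' (Γ (h x)) = h x
      have e1 : Γ (h x) = h (g x) := hΓh hx
      have e2 : Γ' (h (g x)) = h (σ (g x)) := hΓ'h hgx
      have e3 : σ (g x) = x := hσg hx
      rw [e1, e2, e3]
    · intro j y hy
      have hy' : Γ y ∈ B d := hΓ.1 hy
      show Γ' (Γ (φ j y)) = φ j (Γ' (Γ y))
      rw [show Γ (φ j y) = φ j (Γ y) from hΓφ j hy]
      exact hΓ'φ j hy'
  exact ⟨hΓ, Γ', hΓ'H, h₂, h₁⟩
end
end
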